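/- Let Λ ∈ R^{K×K} and Σ ∈ R^{K×K} be positive definite, μ ∈ R^K, τ, ν > 0, m ∈ R^{d} (d = D − K), a ∈ R^K, w⊥ ∈ R^D with ‖w⊥‖ the Euclidean norm. Define D_PSC = SKL(N(0,Λ), N(μ,Σ)) + SKL(N(0,τI_d), N(m,νI_d)). Then |a^T μ + w⊥^T μ⊥| ≤ √(2 D_PSC) · √(a^T Λ a + τ‖w⊥‖²), whenever ‖μ⊥‖ = ‖m‖ (μ⊥ is the ambient residual mean with coordinates m). -/

import Mathlib

open Matrix
open scoped MatrixOrder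

/-- KL divergence between the `K`-dimensional Gaussians `N(m₁, C₁)` and `N(m₂, C₂)`
(positive definite covariances), via the standard closed form
`D_KL = (1/2)[tr(C₂⁻¹C₁) + (m₂-m₁)ᵀC₂⁻¹(m₂-m₁) - K + log(det C₂ / det C₁)]`. -/
noncomputable def klGauss {K : ℕ} (m₁ : Fin K → ℝ) (C₁ : Matrix (Fin K) (Fin K) ℝ)
    (m₂ : Fin K → ℝ) (C₂ : Matrix (Fin K) (Fin K) ℝ) : ℝ :=
  (1 / 2) * ((C₂⁻¹ * C₁).trace + (m₂ - m₁) ⬝ᵥ C₂⁻¹.mulVec (m₂ - m₁) - K +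
    Real.log (C₂.det / C₁.det))

/-- Symmetrized KL divergence between Gaussians. -/
noncomputable def sklGauss {K : ℕ} (m₁ : Fin K → ℝ) (C₁ : Matrix (Fin K) (Fin K) ℝ)
    (m₂ : Fin K → ℝ) (C₂ : Matrix (Fin K) (Fin K) ℝ) : ℝ :=
  klGauss m₁ C₁ m₂ C₂ + klGauss m₂ C₂ m₁ C₁

/-- Trace of a real positive semidefinite matrix is nonnegative. -/
lemma trace_nonneg_of_psd {n : Type*} [Fintype n] [DecidableEq n] {M : Matrix n n ℝ}
    (hM : M.PosSemidef) : 0 ≤ M.trace := by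
  rw [Matrix.trace]
  refine Finset.sum_nonneg fun i _ => ?_
  have := hM.dotProduct_mulVec_nonneg (Pi.single i 1)
  simpa [dotProduct, Matrix.mulVec, Pi.single_apply, Finset.mul_sum,
    Finset.sum_ite_eq, Finset.sum_ite_eq'] using this

/-- Trace of a product of real PSD matrices is nonnegative. -/
lemma trace_mul_nonneg_of_psd {n : Type*} [Fintype n] [DecidableEq n] {A B : Matrix n n ℝ}
    (hA : A.PosSemidef) (hB : B.PosSemidef) : 0 ≤ (A * B).trace := by
  have h2 : (A * B).trace = (CFC.sqrt A * B * CFC.sqrt A).trace := by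
    conv_lhs => rw [(CFC.sqrt_mul_sqrt_self A hA.nonneg).symm]
    rw [Matrix.mul_assoc, Matrix.trace_mul_comm, Matrix.mul_assoc]
  rw [h2]
  have hH : (CFC.sqrt A).conjTranspose = CFC.sqrt A := (CFC.sqrt_nonneg A).posSemidef.isHermitian
  refine trace_nonneg_of_psd ?_
  have := hB.conjTranspose_mul_mul_same (CFC.sqrt A)
  rwa [hH] at this

/-- SKL between `N(0,Λ)` and `N(μ,S)` dominates `(1/2) μᵀ Λ⁻¹ μ`. -/
lemma skl_lower {K : ℕ} {Λ S : Matrix (Fin K) (Fin K) ℝ} (hΛ : Λ.PosDef) (hS : S.PosDef)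
    (μ : Fin K → ℝ) :
    (1/2) * (μ ⬝ᵥ Λ⁻¹.mulVec μ) ≤ sklGauss 0 Λ μ S := by
  have hΛu : IsUnit Λ.det := isUnit_iff_ne_zero.mpr hΛ.det_pos.ne'
  have hSu : IsUnit S.det := isUnit_iff_ne_zero.mpr hS.det_pos.ne'
  have hE : (S - Λ).IsHermitian := hS.1.sub hΛ.1
  have hpsd : ((S - Λ) * S⁻¹ * (S - Λ)).PosSemidef := by
    have := (hS.inv.posSemidef).conjTranspose_mul_mul_same (S - Λ)
    rwa [hE.eq] at this
  have htr0 : 0 ≤ (Λ⁻¹ * ((S - Λ) * S⁻¹ * (S - Λ))).trace :=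
    trace_mul_nonneg_of_psd hΛ.inv.posSemidef hpsd
  have hid : Λ⁻¹ * ((S - Λ) * S⁻¹ * (S - Λ)) =
      Λ⁻¹ * S - 2 • (1 : Matrix (Fin K) (Fin K) ℝ) + S⁻¹ * Λ := by
    have h1 : Λ⁻¹ * Λ = 1 := Matrix.nonsing_inv_mul Λ hΛu
    have h2 : S * S⁻¹ = 1 := Matrix.mul_nonsing_inv S hSu
    have h3 : S⁻¹ * S = 1 := Matrix.nonsing_inv_mul S hSu
    have hA : ∀ M : Matrix (Fin K) (Fin K) ℝ, S * (S⁻¹ * M) = M := fun M => by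
      rw [← Matrix.mul_assoc, h2, Matrix.one_mul]
    have hB : ∀ M : Matrix (Fin K) (Fin K) ℝ, Λ⁻¹ * (Λ * M) = M := fun M => by
      rw [← Matrix.mul_assoc, h1, Matrix.one_mul]
    simp only [Matrix.sub_mul, Matrix.mul_sub, Matrix.mul_assoc, hA, hB, h3, h1,
      Matrix.mul_one]
    rw [two_smul]
    abel
  have htr : 2 * (K : ℝ) ≤ (S⁻¹ * Λ).trace + (Λ⁻¹ * S).trace := by
    have := htr0
    rw [hid] at this
    simp only [Matrix.trace_add, Matrix.trace_sub, Matrix.trace_smul, Matrix.trace_one] at this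
    simp only [Fintype.card_fin, nsmul_eq_mul, Nat.cast_ofNat] at this
    linarith
  have hq : 0 ≤ μ ⬝ᵥ S⁻¹.mulVec μ := by
    have := hS.inv.posSemidef.dotProduct_mulVec_nonneg μ
    simpa using this
  have hlog : Real.log (S.det / Λ.det) + Real.log (Λ.det / S.det) = 0 := by
    rw [show Λ.det / S.det = (S.det / Λ.det)⁻¹ by rw [inv_div], Real.log_inv]; ring
  have hexp : sklGauss 0 Λ μ S = (1/2) * ((S⁻¹ * Λ).trace + (Λ⁻¹ * S).trace - 2*K)
      + (1/2) * (μ ⬝ᵥ S⁻¹.mulVec μ) + (1/2) * (μ ⬝ᵥ Λ⁻¹.mulVec μ) := by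
    simp only [sklGauss, klGauss, sub_zero, zero_sub, neg_dotProduct,
      Matrix.mulVec_neg, dotProduct_neg, neg_neg]
    linear_combination (1/2) * hlog
  rw [hexp]
  nlinarith

lemma inv_smul_one' {d : ℕ} {c : ℝ} (hc : 0 < c) :
    (c • (1 : Matrix (Fin d) (Fin d) ℝ))⁻¹ = c⁻¹ • (1 : Matrix (Fin d) (Fin d) ℝ) := by
  apply Matrix.inv_eq_right_inv
  rw [Matrix.smul_mul, Matrix.mul_smul, smul_smul, Matrix.mul_one, mul_inv_cancel₀ hc.ne',
    one_smul]

/-- SKL between isotropic Gaussians dominates `‖m‖²/(2τ)`. -/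
lemma skl_scalar_lower {d : ℕ} (τ ν : ℝ) (hτ : 0 < τ) (hν : 0 < ν) (m : Fin d → ℝ) :
    (1/2) * (τ⁻¹ * (m ⬝ᵥ m)) ≤
      sklGauss 0 (τ • (1 : Matrix (Fin d) (Fin d) ℝ)) m (ν • (1 : Matrix (Fin d) (Fin d) ℝ)) := by
  have hm : 0 ≤ m ⬝ᵥ m := Finset.sum_nonneg fun i _ => mul_self_nonneg (m i)
  have hlog : Real.log ((ν • (1:Matrix (Fin d) (Fin d) ℝ)).det / (τ • (1:Matrix (Fin d) (Fin d) ℝ)).det)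
      + Real.log ((τ • (1:Matrix (Fin d) (Fin d) ℝ)).det / (ν • (1:Matrix (Fin d) (Fin d) ℝ)).det) = 0 := by
    rw [show (τ • (1:Matrix (Fin d) (Fin d) ℝ)).det / (ν • (1:Matrix (Fin d) (Fin d) ℝ)).det
        = ((ν • (1:Matrix (Fin d) (Fin d) ℝ)).det / (τ • (1:Matrix (Fin d) (Fin d) ℝ)).det)⁻¹
      by rw [inv_div], Real.log_inv]
    ring
  have hexp : sklGauss 0 (τ • (1 : Matrix (Fin d) (Fin d) ℝ)) m (ν • (1 : Matrix (Fin d) (Fin d) ℝ))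
      = (1/2) * (ν⁻¹ * τ * d + ν⁻¹ * (m ⬝ᵥ m) - d) + (1/2) * (τ⁻¹ * ν * d + τ⁻¹ * (m ⬝ᵥ m) - d) := by
    simp only [sklGauss, klGauss, inv_smul_one' hτ, inv_smul_one' hν, sub_zero, zero_sub,
      Matrix.smul_mul, Matrix.mul_smul, smul_smul, Matrix.mul_one, Matrix.trace_smul,
      Matrix.trace_one, Fintype.card_fin, Matrix.smul_mulVec, Matrix.one_mulVec,
      dotProduct_smul, neg_dotProduct, dotProduct_neg, neg_neg, smul_eq_mul]
    linear_combination (1/2) * hlog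
  rw [hexp]
  have h1 : 0 ≤ ν⁻¹ * (m ⬝ᵥ m) := by positivity
  have h2 : 0 ≤ ((τ - ν)^2 / (τ * ν)) * d := by positivity
  have h3 : ν⁻¹ * τ * d + τ⁻¹ * ν * d - 2 * d = ((τ - ν)^2 / (τ * ν)) * d := by
    field_simp; ring
  nlinarith

lemma dot_cs {n : ℕ} (u v : Fin n → ℝ) : (u ⬝ᵥ v)^2 ≤ (u ⬝ᵥ u) * (v ⬝ᵥ v) := by
  simpa [dotProduct, sq] using
    Finset.sum_mul_sq_le_sq_mul_sq Finset.univ u v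

/-- Cauchy–Schwarz in the `Λ`-metric. -/
lemma cs_metric {K : ℕ} {Λ : Matrix (Fin K) (Fin K) ℝ} (hΛ : Λ.PosDef)
    (a μ : Fin K → ℝ) :
    (a ⬝ᵥ μ)^2 ≤ (a ⬝ᵥ Λ.mulVec a) * (μ ⬝ᵥ Λ⁻¹.mulVec μ) := by
  set R := CFC.sqrt Λ with hR
  have hRR : R * R = Λ := CFC.sqrt_mul_sqrt_self Λ hΛ.posSemidef.nonneg
  have hRH : Rᵀ = R := by
    have := (CFC.sqrt_nonneg Λ).posSemidef.isHermitian
    exact (Matrix.conjTranspose_eq_transpose_of_trivial R).symm.trans this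
  have hRdet : IsUnit R.det := by
    have hd : R.det * R.det = Λ.det := by rw [← Matrix.det_mul, hRR]
    refine isUnit_iff_ne_zero.mpr fun h => ?_
    rw [h, mul_zero] at hd
    exact hΛ.det_pos.ne hd
  have hvm : ∀ x : Fin K → ℝ, x ᵥ* R = R *ᵥ x := fun x => by
    rw [← Matrix.mulVec_transpose, hRH]
  have hvm' : ∀ x : Fin K → ℝ, x ᵥ* R⁻¹ = R⁻¹ *ᵥ x := fun x => by
    rw [← Matrix.mulVec_transpose, Matrix.transpose_nonsing_inv, hRH]
  have key : a ⬝ᵥ μ = (R *ᵥ a) ⬝ᵥ (R⁻¹ *ᵥ μ) := by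
    rw [Matrix.dotProduct_mulVec, hvm', Matrix.mulVec_mulVec,
      Matrix.nonsing_inv_mul R hRdet, Matrix.one_mulVec]
  have qa : (R *ᵥ a) ⬝ᵥ (R *ᵥ a) = a ⬝ᵥ Λ.mulVec a := by
    rw [Matrix.dotProduct_mulVec, hvm, Matrix.mulVec_mulVec, hRR, dotProduct_comm]
  have qm : (R⁻¹ *ᵥ μ) ⬝ᵥ (R⁻¹ *ᵥ μ) = μ ⬝ᵥ Λ⁻¹.mulVec μ := by
    rw [Matrix.dotProduct_mulVec, hvm', Matrix.mulVec_mulVec, ← Matrix.mul_inv_rev, hRR,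
      dotProduct_comm]
  rw [key, ← qa, ← qm]
  exact dot_cs _ _

lemma sqrt_cs (p q r s : ℝ) (hp : 0 ≤ p) (hq : 0 ≤ q) (hr : 0 ≤ r) (hs : 0 ≤ s) :
    Real.sqrt p * Real.sqrt r + Real.sqrt q * Real.sqrt s ≤
      Real.sqrt (p + q) * Real.sqrt (r + s) := by
  rw [← Real.sqrt_mul hp, ← Real.sqrt_mul hq, ← Real.sqrt_mul (by positivity)]
  have h1 : (Real.sqrt (p*r) + Real.sqrt (q*s))^2 ≤ (p+q)*(r+s) := by
    have e1 : Real.sqrt (p*r) ^ 2 = p*r := Real.sq_sqrt (by positivity)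
    have e2 : Real.sqrt (q*s) ^ 2 = q*s := Real.sq_sqrt (by positivity)
    have e3 : Real.sqrt (p*r) * Real.sqrt (q*s) = Real.sqrt (p*s) * Real.sqrt (q*r) := by
      rw [← Real.sqrt_mul (by positivity), ← Real.sqrt_mul (by positivity)]
      ring_nf
    have e4 : Real.sqrt (p*s) ^ 2 = p*s := Real.sq_sqrt (by positivity)
    have e5 : Real.sqrt (q*r) ^ 2 = q*r := Real.sq_sqrt (by positivity)
    nlinarith [sq_nonneg (Real.sqrt (p*s) - Real.sqrt (q*r))]
  calc Real.sqrt (p*r) + Real.sqrt (q*s)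
      = Real.sqrt ((Real.sqrt (p*r) + Real.sqrt (q*s))^2) := by
        rw [Real.sqrt_sq (by positivity)]
    _ ≤ Real.sqrt ((p+q)*(r+s)) := Real.sqrt_le_sqrt h1

/-- PSC controls predictive mean drift.  With
`D_PSC = SKL(N(0,Λ), N(μ,Σ)) + SKL(N(0,τI_d), N(m,νI_d))` and `‖μ⊥‖ = ‖m‖`,
`|aᵀμ + w⊥ᵀμ⊥| ≤ √(2 D_PSC) · √(aᵀΛa + τ‖w⊥‖²)`. -/
theorem stmt16 {K D d : ℕ} (hd : d = D - K)
    (Λ S : Matrix (Fin K) (Fin K) ℝ) (hΛ : Λ.PosDef) (hS : S.PosDef)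
    (μ : Fin K → ℝ) (τ ν : ℝ) (hτ : 0 < τ) (hν : 0 < ν)
    (m : Fin d → ℝ) (a : Fin K → ℝ) (wperp μperp : Fin D → ℝ)
    (hnorm : μperp ⬝ᵥ μperp = m ⬝ᵥ m)
    (DPSC : ℝ)
    (hDPSC : DPSC = sklGauss 0 Λ μ S +
      sklGauss 0 (τ • (1 : Matrix (Fin d) (Fin d) ℝ)) m
        (ν • (1 : Matrix (Fin d) (Fin d) ℝ))) :
    |a ⬝ᵥ μ + wperp ⬝ᵥ μperp| ≤
      Real.sqrt (2 * DPSC) * Real.sqrt (a ⬝ᵥ Λ.mulVec a + τ * (wperp ⬝ᵥ wperp)) := by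
  set A2 := a ⬝ᵥ Λ.mulVec a with hA2
  set B2 := τ * (wperp ⬝ᵥ wperp) with hB2
  set x2 := μ ⬝ᵥ Λ⁻¹.mulVec μ with hx2
  set y2 := τ⁻¹ * (m ⬝ᵥ m) with hy2
  have hA2n : 0 ≤ A2 := by
    have := hΛ.posSemidef.dotProduct_mulVec_nonneg a; simpa using this
  have hx2n : 0 ≤ x2 := by
    have := hΛ.inv.posSemidef.dotProduct_mulVec_nonneg μ; simpa using this
  have hwn : 0 ≤ wperp ⬝ᵥ wperp := Finset.sum_nonneg fun i _ => mul_self_nonneg _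
  have hmn : 0 ≤ m ⬝ᵥ m := Finset.sum_nonneg fun i _ => mul_self_nonneg _
  have hB2n : 0 ≤ B2 := by positivity
  have hy2n : 0 ≤ y2 := by positivity
  -- bound on x2 + y2
  have hbound : x2 + y2 ≤ 2 * DPSC := by
    have h1 := skl_lower hΛ hS μ
    have h2 := skl_scalar_lower τ ν hτ hν m
    rw [hDPSC]; linarith
  -- Cauchy-Schwarz bounds
  have h1 : |a ⬝ᵥ μ| ≤ Real.sqrt A2 * Real.sqrt x2 := by
    have := cs_metric hΛ a μ
    calc |a ⬝ᵥ μ| = Real.sqrt ((a ⬝ᵥ μ)^2) := (Real.sqrt_sq_eq_abs _).symm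
      _ ≤ Real.sqrt (A2 * x2) := Real.sqrt_le_sqrt this
      _ = Real.sqrt A2 * Real.sqrt x2 := Real.sqrt_mul hA2n _
  have h2 : |wperp ⬝ᵥ μperp| ≤ Real.sqrt B2 * Real.sqrt y2 := by
    have hcs := dot_cs wperp μperp
    have heq : (wperp ⬝ᵥ wperp) * (μperp ⬝ᵥ μperp) = B2 * y2 := by
      rw [hnorm, hB2, hy2]
      field_simp
    calc |wperp ⬝ᵥ μperp| = Real.sqrt ((wperp ⬝ᵥ μperp)^2) := (Real.sqrt_sq_eq_abs _).symm
      _ ≤ Real.sqrt ((wperp ⬝ᵥ wperp) * (μperp ⬝ᵥ μperp)) := Real.sqrt_le_sqrt hcs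
      _ = Real.sqrt (B2 * y2) := by rw [heq]
      _ = Real.sqrt B2 * Real.sqrt y2 := Real.sqrt_mul hB2n _
  have h3 : Real.sqrt A2 * Real.sqrt x2 + Real.sqrt B2 * Real.sqrt y2 ≤
      Real.sqrt (A2 + B2) * Real.sqrt (x2 + y2) :=
    sqrt_cs A2 B2 x2 y2 hA2n hB2n hx2n hy2n
  have h4 : Real.sqrt (x2 + y2) ≤ Real.sqrt (2 * DPSC) := Real.sqrt_le_sqrt hbound
  calc |a ⬝ᵥ μ + wperp ⬝ᵥ μperp| ≤ |a ⬝ᵥ μ| + |wperp ⬝ᵥ μperp| := abs_add_le _ _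
    _ ≤ Real.sqrt A2 * Real.sqrt x2 + Real.sqrt B2 * Real.sqrt y2 := add_le_add h1 h2
    _ ≤ Real.sqrt (A2 + B2) * Real.sqrt (x2 + y2) := h3
    _ ≤ Real.sqrt (A2 + B2) * Real.sqrt (2 * DPSC) := by
        exact mul_le_mul_of_nonneg_left h4 (Real.sqrt_nonneg _)
    _ = Real.sqrt (2 * DPSC) * Real.sqrt (A2 + B2) := mul_comm _ _
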